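/- Let π : Q̃ → Q be a minimal gradable covering of a connected locally finite quiver Q, with (a, 0) a vertex of Q̃ for some a ∈ Q_0. Then (b, n) is a vertex of Q̃ (for b ∈ Q_0, n ∈ ℤ) if and only if n ≡ d (mod r_Q), where d is the degree of some walk in Q from a to b, and r_Q is the grading period of Q. -/

import Mathlib

universe u v

/-- A walk in a quiver: a sequence of forward or backward traversals of arrows. -/
inductive QWalk {V : Type u} [Quiver.{v} V] : V → V → Type (max u v) where
  | nil {a : V} : QWalk a a
  | fwd {a b c : V} (w : QWalk a b) (e : b ⟶ c) : QWalk a c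
  | bwd {a b c : V} (w : QWalk a b) (e : c ⟶ b) : QWalk a c

namespace QWalk

/-- The degree of a walk: forward arrows count +1, backward arrows count -1. -/
def degree {V : Type u} [Quiver.{v} V] : {a b : V} → QWalk a b → ℤ
  | _, _, nil => 0
  | _, _, fwd w _ => degree w + 1
  | _, _, bwd w _ => degree w - 1

end QWalk

/-- A quiver is gradable if any two walks between the same pair of vertices
have the same degree. -/
def QuiverGradable (V : Type u) [Quiver.{v} V] : Prop :=
  ∀ ⦃a b : V⦄ (w w' : QWalk a b), w.degree = w'.degree

/-- A quiver is locally finite if there are only finitely many arrows between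
any two vertices and each vertex has finitely many neighbours. -/
def LocallyFiniteQuiver (V : Type u) [Quiver.{v} V] : Prop :=
  (∀ a b : V, Finite (a ⟶ b)) ∧
    ∀ a : V, {b : V | Nonempty (a ⟶ b) ∨ Nonempty (b ⟶ a)}.Finite
/-- The quiver `Q^ℤ`: vertices are pairs `(a, i)` with `a` a vertex of `Q` and `i : ℤ`;
arrows `(α, i) : (a, i) → (b, i + 1)` for each arrow `α : a → b` of `Q`. -/
def ZQuiver (V : Type u) [Quiver.{v} V] : Quiver.{v} (V × ℤ) :=
  ⟨fun x y => (x.1 ⟶ y.1) × PLift (y.2 = x.2 + 1)⟩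
/-- Two vertices of `Q^ℤ` lie in the same connected component iff there is a walk
between them. -/
def ZConn (V : Type u) [Quiver.{v} V] (x y : V × ℤ) : Prop :=
  Nonempty (@QWalk (V × ℤ) (ZQuiver V) x y)

/-- `r` is the grading period of the quiver `Q`: it is `0` if `Q` is gradable, and
otherwise it is the minimal positive degree of a closed walk in `Q`. -/
def IsGradingPeriod (V : Type u) [Quiver.{v} V] (r : ℤ) : Prop :=
  (QuiverGradable V ∧ r = 0) ∨
    (¬ QuiverGradable V ∧ 0 < r ∧ (∃ (a : V) (w : QWalk a a), w.degree = r) ∧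
      ∀ (a : V) (w : QWalk a a), 0 < w.degree → r ≤ w.degree)

namespace QWalk

variable {V : Type u} [Quiver.{v} V]

def comp : {a b c : V} → QWalk a b → QWalk b c → QWalk a c
  | _, _, _, w, nil => w
  | _, _, _, w, fwd u e => fwd (comp w u) e
  | _, _, _, w, bwd u e => bwd (comp w u) e

lemma degree_comp : ∀ {a b c : V} (w : QWalk a b) (u : QWalk b c),
    (comp w u).degree = w.degree + u.degree
  | _, _, _, _, nil => by simp [comp, degree]
  | _, _, _, w, fwd u e => by simp [comp, degree, degree_comp w u]; ring
  | _, _, _, w, bwd u e => by simp [comp, degree, degree_comp w u]; ring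

def rev : {a b : V} → QWalk a b → QWalk b a
  | _, _, nil => nil
  | _, _, fwd w e => comp (bwd nil e) (rev w)
  | _, _, bwd w e => comp (fwd nil e) (rev w)

lemma degree_rev : ∀ {a b : V} (w : QWalk a b), w.rev.degree = -w.degree
  | _, _, nil => by simp [rev, degree]
  | _, _, fwd w e => by simp only [rev, degree_comp, degree, degree_rev w]; ring
  | _, _, bwd w e => by simp only [rev, degree_comp, degree, degree_rev w]; ring

def npow {a : V} (c : QWalk a a) : ℕ → QWalk a a
  | 0 => nil
  | k + 1 => comp (npow c k) c

lemma degree_npow {a : V} (c : QWalk a a) : ∀ k : ℕ, (npow c k).degree = k * c.degree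
  | 0 => by simp [npow, degree]
  | k + 1 => by simp [npow, degree_comp, degree_npow c k]; ring

/-- From a closed walk of degree `r` at `a₀`, produce closed walks of degree `m * r`. -/
lemma exists_closed_of_mul {a₀ : V} (c : QWalk a₀ a₀) (m : ℤ) :
    ∃ u : QWalk a₀ a₀, u.degree = m * c.degree := by
  rcases le_or_gt 0 m with hm | hm
  · refine ⟨npow c m.toNat, ?_⟩
    rw [degree_npow, Int.toNat_of_nonneg hm]
  · refine ⟨npow c.rev (-m).toNat, ?_⟩
    rw [degree_npow, degree_rev, Int.toNat_of_nonneg (by omega)]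
    ring

end QWalk

section ZW

variable {V : Type u} [Quiver.{v} V]

lemma zwalk_proj {x y : V × ℤ} (w : @QWalk (V × ℤ) (ZQuiver V) x y) :
    ∃ u : QWalk x.1 y.1, u.degree = y.2 - x.2 := by
  letI : Quiver (V × ℤ) := ZQuiver V
  induction w with
  | nil => exact ⟨QWalk.nil, by simp [QWalk.degree]⟩
  | fwd w e ih =>
    obtain ⟨u, hu⟩ := ih
    have he := e.2.down
    exact ⟨QWalk.fwd u e.1, by simp only [QWalk.degree]; omega⟩
  | bwd w e ih =>
    obtain ⟨u, hu⟩ := ih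
    have he := e.2.down
    exact ⟨QWalk.bwd u e.1, by simp only [QWalk.degree]; omega⟩

lemma zwalk_lift {a b : V} (w : QWalk a b) :
    ∀ (i j : ℤ), j = i + w.degree →
      Nonempty (@QWalk (V × ℤ) (ZQuiver V) (a, i) (b, j)) := by
  letI : Quiver (V × ℤ) := ZQuiver V
  induction w with
  | nil =>
    intro i j hj
    simp only [QWalk.degree, add_zero] at hj
    subst hj
    exact ⟨QWalk.nil⟩
  | fwd w e ih =>
    intro i j hj
    obtain ⟨W⟩ := ih i (i + w.degree) rfl
    have hj' : j = (i + w.degree) + 1 := by simp only [QWalk.degree] at hj; omega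
    exact ⟨QWalk.fwd W (show ((_, i + w.degree) : V × ℤ) ⟶ (_, j) from ⟨e, PLift.up hj'⟩)⟩
  | bwd w e ih =>
    intro i j hj
    obtain ⟨W⟩ := ih i (i + w.degree) rfl
    have hj' : i + w.degree = j + 1 := by simp only [QWalk.degree] at hj; omega
    exact ⟨QWalk.bwd W (show ((_, j) : V × ℤ) ⟶ (_, i + w.degree) from ⟨e, PLift.up hj'⟩)⟩

lemma zconn_iff (a b : V) (n : ℤ) :
    ZConn V (a, 0) (b, n) ↔ ∃ w : QWalk a b, w.degree = n := by
  constructor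
  · rintro ⟨W⟩
    obtain ⟨u, hu⟩ := zwalk_proj W
    exact ⟨u, by simpa using hu⟩
  · rintro ⟨w, hw⟩
    exact zwalk_lift w 0 n (by omega)

end ZW

/-- Let `π : Q̃ → Q` be a minimal gradable covering of a connected
locally finite quiver `Q`, where `Q̃` is the connected component of `Q^ℤ` containing
a vertex `(a, 0)`.  Then `(b, n)` is a vertex of `Q̃` if and only if
`n ≡ d (mod r_Q)` where `d` is the degree of some walk in `Q` from `a` to `b`. -/
theorem mem_component_iff_degree_mod_period (V : Type u) [Quiver.{v} V]
    (hconn : ∀ a b : V, Nonempty (QWalk a b)) (hlf : LocallyFiniteQuiver V)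
    {r : ℤ} (hr : IsGradingPeriod V r) (a b : V) (n : ℤ) :
    ZConn V (a, 0) (b, n) ↔ ∃ w : QWalk a b, n ≡ w.degree [ZMOD r] := by
  rw [zconn_iff]
  constructor
  · rintro ⟨w, hw⟩
    exact ⟨w, by rw [hw]⟩
  · rintro ⟨w, hw⟩
    rcases hr with ⟨_, rfl⟩ | ⟨_, hpos, ⟨a₀, c, hc⟩, _⟩
    · refine ⟨w, ?_⟩
      simpa [Int.ModEq, Int.emod_zero] using hw.symm
    · have hdvd : r ∣ w.degree - n := hw.dvd
      obtain ⟨m, hm⟩ := hdvd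
      obtain ⟨u, hu⟩ := QWalk.exists_closed_of_mul c (-m)
      obtain ⟨p⟩ := hconn b a₀
      refine ⟨(w.comp p).comp (u.comp p.rev), ?_⟩
      have hd : ((w.comp p).comp (u.comp p.rev)).degree = w.degree - m * r := by
        simp only [QWalk.degree_comp, QWalk.degree_rev, hu, hc]; ring
      rw [hd]
      linear_combination hm
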